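/- For a probability measure μ on ℝ^d with finite moments of order n(n-1), define F_n(μ) = ∫_{ℝ^{dn}} ∏_{1 ≤ i < j ≤ n} |z^i - z^j|^2 dμ(z^1)⋯dμ(z^n). Then F_n(μ) = 0 if and only if μ is a convex combination of at most n-1 Dirac measures, i.e. μ ∈ N_{n-1} = {μ = Σ_{l=1}^{n-1} α_l δ_{x^l} : α_l ≥ 0, x^l ∈ ℝ^d}. -/

import Mathlib

open MeasureTheory
open scoped ENNReal

open Metric


-- card of strict-lt pairs
lemma card_lt_pairs (n : ℕ) :
    2 * ((Finset.univ.filter (fun p : Fin n × Fin n => p.1 < p.2)).card) ≤ n * (n - 1) := by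
  classical
  set A := Finset.univ.filter (fun p : Fin n × Fin n => p.1 < p.2) with hA
  set B := Finset.univ.filter (fun p : Fin n × Fin n => p.2 < p.1) with hB
  have hcard : A.card = B.card := by
    apply Finset.card_bij (fun p _ => (p.2, p.1))
    · intro p hp
      simp only [hA, hB, Finset.mem_filter, Finset.mem_univ, true_and] at hp ⊢
      exact hp
    · intro p hp q hq h
      exact Prod.ext (congrArg Prod.snd h) (congrArg Prod.fst h)
    · intro p hp
      refine ⟨(p.2, p.1), ?_, rfl⟩
      simp only [hA, hB, Finset.mem_filter, Finset.mem_univ, true_and] at hp ⊢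
      exact hp
  have hdisj : Disjoint A B := by
    rw [Finset.disjoint_left]
    intro p hp hq
    simp only [hA, hB, Finset.mem_filter, Finset.mem_univ, true_and] at hp hq
    exact absurd (hp.trans hq) (lt_irrefl _)
  have hsub : A ∪ B ⊆ Finset.univ.offDiag := by
    intro p hp
    rcases Finset.mem_union.1 hp with h | h <;>
      simp only [hA, hB, Finset.mem_filter, Finset.mem_univ, true_and] at h <;>
      · rw [Finset.mem_offDiag]
        refine ⟨Finset.mem_univ _, Finset.mem_univ _, ?_⟩
        first
          | exact ne_of_lt h
          | exact (ne_of_lt h).symm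
  have h1 : A.card + B.card ≤ (Finset.univ : Finset (Fin n)).offDiag.card := by
    rw [← Finset.card_union_of_disjoint hdisj]
    exact Finset.card_le_card hsub
  rw [Finset.offDiag_card, Finset.card_univ, Fintype.card_fin] at h1
  have : n * n - n = n * (n - 1) := by
    cases n with
    | zero => simp
    | succ m => simp only [Nat.succ_sub_one, Nat.mul_succ]; omega
  omega

lemma aux_pow_le {t : ℝ} (ht : 0 ≤ t) {a b : ℕ} (hab : a ≤ b) : t ^ a ≤ 1 + t ^ b := by
  rcases le_total t 1 with h | h
  · calc t ^ a ≤ 1 := pow_le_one₀ ht h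
      _ ≤ 1 + t ^ b := le_add_of_nonneg_right (pow_nonneg ht b)
  · calc t ^ a ≤ t ^ b := pow_le_pow_right₀ h hab
      _ ≤ 1 + t ^ b := le_add_of_nonneg_left one_pos.le

lemma integrable_one_add_norm_pow {d n : ℕ} (μ : Measure (EuclideanSpace ℝ (Fin d)))
    [IsProbabilityMeasure μ]
    (hmom : Integrable (fun x : EuclideanSpace ℝ (Fin d) => ‖x‖ ^ (n * (n - 1))) μ)
    {a : ℕ} (ha : a ≤ n * (n - 1)) :
    Integrable (fun x : EuclideanSpace ℝ (Fin d) => (1 + ‖x‖) ^ a) μ := by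
  have hG : Integrable (fun x : EuclideanSpace ℝ (Fin d) =>
      (2:ℝ) ^ a * (2 + ‖x‖ ^ (n * (n-1)))) μ :=
    (((integrable_const (2:ℝ)).add hmom).const_mul _)
  refine hG.mono' ?_ (Filter.Eventually.of_forall fun x => ?_)
  · exact (Continuous.pow (by continuity) a).aestronglyMeasurable
  · have ht : (0:ℝ) ≤ ‖x‖ := norm_nonneg _
    have h1 : (1 + ‖x‖) ≤ 2 * max 1 ‖x‖ := by
      rcases le_total ‖x‖ 1 with h | h
      · calc (1:ℝ) + ‖x‖ ≤ 1 + 1 := by linarith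
          _ ≤ 2 * max 1 ‖x‖ := by
            have := le_max_left (1:ℝ) ‖x‖; linarith
      · calc (1:ℝ) + ‖x‖ ≤ ‖x‖ + ‖x‖ := by linarith
          _ ≤ 2 * max 1 ‖x‖ := by
            have := le_max_right (1:ℝ) ‖x‖; linarith
    have h2 : (1 + ‖x‖) ^ a ≤ (2:ℝ) ^ a * (max 1 ‖x‖) ^ a := by
      rw [← mul_pow]
      exact pow_le_pow_left₀ (by linarith) h1 a
    have h3 : (max 1 ‖x‖ : ℝ) ^ a ≤ 2 + ‖x‖ ^ (n * (n-1)) := by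
      rcases max_cases (1:ℝ) ‖x‖ with ⟨he, _⟩ | ⟨he, _⟩ <;> rw [he]
      · simp only [one_pow]
        have := pow_nonneg ht (n * (n-1)); linarith
      · have := aux_pow_le ht ha; linarith
    rw [Real.norm_of_nonneg (pow_nonneg (by linarith) a)]
    calc (1 + ‖x‖) ^ a ≤ (2:ℝ) ^ a * (max 1 ‖x‖) ^ a := h2
      _ ≤ (2:ℝ) ^ a * (2 + ‖x‖ ^ (n * (n-1))) := by
          have : (0:ℝ) < 2 ^ a := by positivity
          nlinarith [h3]



lemma integrable_F {d n : ℕ} (μ : Measure (EuclideanSpace ℝ (Fin d)))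
    [IsProbabilityMeasure μ]
    (hmom : Integrable (fun x : EuclideanSpace ℝ (Fin d) => ‖x‖ ^ (n * (n - 1))) μ) :
    Integrable (fun z : Fin n → EuclideanSpace ℝ (Fin d) =>
      ∏ p ∈ Finset.univ.filter (fun p : Fin n × Fin n => p.1 < p.2), ‖z p.1 - z p.2‖ ^ 2)
      (Measure.pi fun _ => μ) := by
  classical
  set E := EuclideanSpace ℝ (Fin d)
  set P := Finset.univ.filter (fun p : Fin n × Fin n => p.1 < p.2) with hP
  set a := 2 * P.card with haa
  have ha : a ≤ n * (n - 1) := card_lt_pairs n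
  have h1 : Integrable (fun x : E => (1 + ‖x‖) ^ a) μ :=
    integrable_one_add_norm_pow μ hmom ha
  have hg : Integrable (fun z : Fin n → E => ∏ i, (1 + ‖z i‖) ^ a)
      (Measure.pi fun _ => μ) := by
    letI : MeasureSpace E := ⟨μ⟩
    haveI : SigmaFinite (volume : Measure E) := by
      show SigmaFinite μ; infer_instance
    exact Integrable.fintype_prod (f := fun (_ : Fin n) (x : E) => (1 + ‖x‖) ^ a)
      (fun i => h1)
  refine hg.mono' ?_ (Filter.Eventually.of_forall fun z => ?_)
  · apply Continuous.aestronglyMeasurable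
    apply continuous_finset_prod
    intro p _
    exact (((continuous_apply p.1).sub (continuous_apply p.2)).norm).pow 2
  · have hC1 : ∀ i, (1:ℝ) ≤ 1 + ‖z i‖ := fun i => by
      have := norm_nonneg (z i); linarith
    have hCpos : (0:ℝ) ≤ ∏ i, (1 + ‖z i‖) :=
      Finset.prod_nonneg fun i _ => by linarith [hC1 i]
    rw [Real.norm_of_nonneg (Finset.prod_nonneg fun p _ => by positivity)]
    calc ∏ p ∈ P, ‖z p.1 - z p.2‖ ^ 2
        ≤ ∏ p ∈ P, (∏ i, (1 + ‖z i‖)) ^ 2 := by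
          apply Finset.prod_le_prod (fun p _ => by positivity)
          intro p hp
          have hne : p.1 ≠ p.2 := ne_of_lt (Finset.mem_filter.1 hp).2
          have hsub : ({p.1, p.2} : Finset (Fin n)) ⊆ Finset.univ :=
            Finset.subset_univ _
          have hpair : (∏ i ∈ ({p.1, p.2} : Finset (Fin n)), (1 + ‖z i‖))
              = (1 + ‖z p.1‖) * (1 + ‖z p.2‖) := Finset.prod_pair hne
          have hle : (1 + ‖z p.1‖) * (1 + ‖z p.2‖) ≤ ∏ i, (1 + ‖z i‖) := by
            rw [← hpair, ← Finset.prod_sdiff hsub]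
            have hone : (1:ℝ) ≤ ∏ i ∈ Finset.univ \ ({p.1, p.2} : Finset (Fin n)), (1 + ‖z i‖) := by
              have := Finset.prod_le_prod (s := Finset.univ \ ({p.1, p.2} : Finset (Fin n)))
                (f := fun _ => (1:ℝ)) (g := fun i => 1 + ‖z i‖)
                (fun i _ => zero_le_one) (fun i _ => hC1 i)
              simpa using this
            exact le_mul_of_one_le_left (Finset.prod_nonneg fun i _ => by linarith [hC1 i]) hone
          have hnorm : ‖z p.1 - z p.2‖ ≤ (1 + ‖z p.1‖) * (1 + ‖z p.2‖) := by
            have := norm_sub_le (z p.1) (z p.2)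
            nlinarith [norm_nonneg (z p.1), norm_nonneg (z p.2)]
          exact pow_le_pow_left₀ (norm_nonneg _) (hnorm.trans hle) 2
      _ = (∏ i, (1 + ‖z i‖)) ^ a := by
          rw [Finset.prod_const, ← pow_mul, haa, mul_comm]
      _ = ∏ i, (1 + ‖z i‖) ^ a := (Finset.prod_pow _ _ _).symm


-- enumeration helper
lemma finset_enum {α : Type*} (t : Finset α) {n : ℕ} (ht : t.card = n) :
    ∃ y : Fin n → α, Function.Injective y ∧ ∀ i, y i ∈ t := by
  refine ⟨fun i => (t.equivFin.symm (Fin.cast ht.symm i) : α), ?_, fun i => (t.equivFin.symm _).2⟩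
  intro i j hij
  have := t.equivFin.symm.injective (Subtype.ext hij)
  simpa [Fin.ext_iff] using congrArg Fin.val this

lemma support_finset {d n : ℕ} (hn : 2 ≤ n) (μ : Measure (EuclideanSpace ℝ (Fin d)))
    [IsProbabilityMeasure μ]
    (h0 : ∀ y : Fin n → EuclideanSpace ℝ (Fin d),
      (∀ i, ∀ ε > 0, 0 < μ (Metric.ball (y i) ε)) → ¬Function.Injective y) :
    ∃ s : Finset (EuclideanSpace ℝ (Fin d)), s.card ≤ n - 1 ∧ μ (↑s)ᶜ = 0 := by
  classical
  set S := μ.everywherePosSubset Set.univ with hSdef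
  have hae : S =ᵐ[μ] (Set.univ : Set (EuclideanSpace ℝ (Fin d))) :=
    Measure.everywherePosSubset_ae_eq MeasurableSet.univ
  have hS0 : μ Sᶜ = 0 := by
    have h := (MeasureTheory.ae_eq_set.1 hae).2
    rwa [← Set.compl_eq_univ_diff] at h
  have hball : ∀ x ∈ S, ∀ ε > 0, 0 < μ (Metric.ball x ε) := by
    intro x hx ε hε
    have hx2 := hx.2
    exact hx2 _ (by rw [nhdsWithin_univ]; exact Metric.ball_mem_nhds x hε)
  have hno : ∀ t : Finset (EuclideanSpace ℝ (Fin d)), ↑t ⊆ S → t.card ≠ n := by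
    intro t hts htc
    obtain ⟨y, hyinj, hymem⟩ := finset_enum t htc
    exact h0 y (fun i ε hε => hball _ (hts (hymem i)) ε hε) hyinj
  have hfin : S.Finite := by
    by_contra hinf
    obtain ⟨t, hts, htc⟩ := Set.Infinite.exists_subset_card_eq hinf n
    exact hno t hts htc
  refine ⟨hfin.toFinset, ?_, ?_⟩
  · by_contra hcard
    push_neg at hcard
    have hcard' : n ≤ hfin.toFinset.card := by omega
    obtain ⟨t, hts, htc⟩ := Finset.exists_subset_card_eq hcard'
    refine hno t ?_ htc
    intro x hx
    have := hts hx
    rwa [Set.Finite.mem_toFinset] at this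
  · rwa [Set.Finite.coe_toFinset]

lemma measure_eq_finset_sum {d : ℕ} (μ : Measure (EuclideanSpace ℝ (Fin d)))
    (s : Finset (EuclideanSpace ℝ (Fin d))) (hs : μ (↑s)ᶜ = 0) :
    μ = ∑ y ∈ s, μ {y} • Measure.dirac y := by
  classical
  ext A hA
  have hsm : MeasurableSet (↑s : Set (EuclideanSpace ℝ (Fin d))) :=
    s.finite_toSet.isClosed.measurableSet
  have h1 : μ A = μ (A ∩ ↑s) := by
    have := measure_inter_add_diff (μ := μ) A hsm
    have h2 : μ (A \ ↑s) = 0 :=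
      measure_mono_null (fun x hx => hx.2) hs
    rw [← this, h2, add_zero]
  have h2 : (A ∩ ↑s : Set _) = ⋃ y ∈ s.filter (· ∈ A), ({y} : Set _) := by
    ext x
    simp only [Set.mem_inter_iff, Finset.coe_filter, Set.mem_iUnion, Set.mem_singleton_iff,
      Finset.mem_filter, Finset.mem_coe]
    constructor
    · rintro ⟨hxA, hxs⟩; exact ⟨x, ⟨hxs, hxA⟩, rfl⟩
    · rintro ⟨y, ⟨hys, hyA⟩, rfl⟩; exact ⟨hyA, hys⟩
  have h3 : μ (A ∩ ↑s) = ∑ y ∈ s.filter (· ∈ A), μ {y} := by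
    rw [h2]
    rw [measure_biUnion_finset ?_ (fun y _ => measurableSet_singleton y)]
    intro y hy z hz hyz
    simp only [Function.onFun, Set.disjoint_singleton_left, Set.mem_singleton_iff]
    exact hyz
  rw [h1, h3]
  rw [Measure.coe_finset_sum, Finset.sum_apply]
  rw [Finset.sum_filter]
  apply Finset.sum_congr rfl
  intro y hy
  rw [Measure.smul_apply, Measure.dirac_apply' _ hA, smul_eq_mul]
  by_cases hyA : y ∈ A
  · rw [if_pos hyA, Set.indicator_of_mem hyA, Pi.one_apply, mul_one]
  · rw [if_neg hyA, Set.indicator_of_notMem hyA, mul_zero]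


lemma reindex {d : ℕ} (μ : Measure (EuclideanSpace ℝ (Fin d))) [IsFiniteMeasure μ] :
    ∀ (k : ℕ) (s : Finset (EuclideanSpace ℝ (Fin d))), s.card ≤ k →
    ∃ (a : Fin k → NNReal) (x : Fin k → EuclideanSpace ℝ (Fin d)),
      (∑ y ∈ s, μ {y} • Measure.dirac y) = ∑ l, (a l : ℝ≥0∞) • Measure.dirac (x l) := by
  classical
  intro k
  induction k with
  | zero =>
    intro s hs
    have : s = ∅ := Finset.card_eq_zero.1 (Nat.le_zero.1 hs)
    subst this
    exact ⟨fun i => i.elim0, fun i => i.elim0, by simp⟩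
  | succ k ih =>
    intro s hs
    rcases s.eq_empty_or_nonempty with rfl | ⟨y, hy⟩
    · refine ⟨fun _ => 0, fun _ => 0, ?_⟩
      simp
    · have hcard : (s.erase y).card ≤ k := by
        have := Finset.card_erase_of_mem hy
        omega
      obtain ⟨a', x', hax⟩ := ih (s.erase y) hcard
      refine ⟨Fin.cons (μ {y}).toNNReal a', Fin.cons y x', ?_⟩
      rw [← Finset.add_sum_erase s _ hy, hax, Fin.sum_univ_succ]
      simp only [Fin.cons_zero, Fin.cons_succ]
      rw [ENNReal.coe_toNNReal (measure_ne_top μ _)]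

/-- `F_n(μ) = 0` iff `μ` is a convex combination of at most `n-1` Dirac
measures. -/
theorem stmt0 {d n : ℕ} (hn : 2 ≤ n) (μ : Measure (EuclideanSpace ℝ (Fin d)))
    [IsProbabilityMeasure μ]
    (hmom : Integrable (fun x : EuclideanSpace ℝ (Fin d) => ‖x‖ ^ (n * (n - 1))) μ) :
    (∫ z : Fin n → EuclideanSpace ℝ (Fin d),
        ∏ p ∈ Finset.univ.filter (fun p : Fin n × Fin n => p.1 < p.2),
          ‖z p.1 - z p.2‖ ^ 2 ∂(Measure.pi fun _ => μ)) = 0 ↔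
      ∃ (α : Fin (n - 1) → NNReal) (x : Fin (n - 1) → EuclideanSpace ℝ (Fin d)),
        μ = ∑ l, (α l : ℝ≥0∞) • Measure.dirac (x l) := by
  classical
  set E := EuclideanSpace ℝ (Fin d) with hE
  set π : Measure (Fin n → E) := Measure.pi fun _ => μ with hπ
  set P : Finset (Fin n × Fin n) :=
    Finset.univ.filter (fun p : Fin n × Fin n => p.1 < p.2) with hPdef
  set f : (Fin n → E) → ℝ := fun z => ∏ p ∈ P, ‖z p.1 - z p.2‖ ^ 2 with hfdef
  constructor
  · -- forward
    intro h
    have hint : Integrable f π := integrable_F μ hmom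
    have hpos : 0 ≤ f := fun z => Finset.prod_nonneg fun p _ => pow_nonneg (norm_nonneg _) 2
    have hae : f =ᵐ[π] 0 := (integral_eq_zero_iff_of_nonneg hpos hint).1 h
    set D : Set (Fin n → E) := {z | ∃ i j, i ≠ j ∧ z i = z j} with hDdef
    have hDc : π Dᶜ = 0 := by
      have h1 : π {z | ¬ f z = 0} = 0 := by
        have := hae
        rw [Filter.EventuallyEq, ae_iff] at this
        simpa using this
      refine measure_mono_null ?_ h1
      intro z hz
      simp only [Set.mem_compl_iff, hDdef, Set.mem_setOf_eq] at hz ⊢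
      intro hf0
      apply hz
      obtain ⟨p, hp, hp0⟩ := Finset.prod_eq_zero_iff.1 hf0
      have h2 : ‖z p.1 - z p.2‖ = 0 := by
        have := pow_eq_zero_iff (n := 2) (by norm_num) |>.1 hp0
        exact this
      have h3 : z p.1 = z p.2 := by
        rwa [norm_eq_zero, sub_eq_zero] at h2
      exact ⟨p.1, p.2, ne_of_lt (Finset.mem_filter.1 hp).2, h3⟩
    have h0 : ∀ y : Fin n → E,
        (∀ i, ∀ ε > 0, 0 < μ (Metric.ball (y i) ε)) → ¬Function.Injective y := by
      intro y hy hinj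
      set T : Finset (Fin n × Fin n) := Finset.univ.offDiag with hT
      have hTne : T.Nonempty := by
        refine ⟨(⟨0, by omega⟩, ⟨1, by omega⟩), ?_⟩
        rw [hT, Finset.mem_offDiag]
        exact ⟨Finset.mem_univ _, Finset.mem_univ _, by simp [Fin.ext_iff]⟩
      set δ : ℝ := T.inf' hTne (fun p => dist (y p.1) (y p.2)) with hδdef
      have hδ : 0 < δ := by
        rw [hδdef, Finset.lt_inf'_iff]
        intro p hp
        rw [hT, Finset.mem_offDiag] at hp
        exact dist_pos.2 fun hc => hp.2.2 (hinj hc)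
      set B : Fin n → Set E := fun i => Metric.ball (y i) (δ/3) with hB
      have hdisj : ∀ i j : Fin n, i ≠ j → ∀ w : E, w ∈ B i → w ∈ B j → False := by
        intro i j hij w hwi hwj
        have hmem : (i, j) ∈ T := by
          rw [hT, Finset.mem_offDiag]
          exact ⟨Finset.mem_univ _, Finset.mem_univ _, hij⟩
        have h4 : δ ≤ dist (y i) (y j) := Finset.inf'_le _ hmem
        have h5 : dist (y i) (y j) ≤ dist (y i) w + dist w (y j) := dist_triangle _ _ _
        rw [hB] at hwi hwj
        simp only [Metric.mem_ball] at hwi hwj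
        rw [dist_comm] at hwi
        linarith
      set A : Set (Fin n → E) := Set.pi Set.univ B with hA
      have hApi : π A = ∏ i, μ (B i) := Measure.pi_pi _ _
      have hApos : 0 < π A := by
        rw [hApi]
        refine CanonicallyOrderedAdd.prod_pos.2 fun i _ => ?_
        exact hy i (δ/3) (by linarith)
      have hAD : A ⊆ Dᶜ := by
        intro z hzA
        simp only [Set.mem_compl_iff, hDdef, Set.mem_setOf_eq]
        rintro ⟨i, j, hij, heq⟩
        have hzi : z i ∈ B i := hzA i (Set.mem_univ i)
        have hzj : z j ∈ B j := hzA j (Set.mem_univ j)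
        rw [heq] at hzi
        exact hdisj i j hij (z j) hzi hzj
      have := (measure_mono hAD).trans_eq hDc
      exact absurd this (by simpa using hApos.ne')
    obtain ⟨s, hscard, hs0⟩ := support_finset hn μ h0
    obtain ⟨a, x, hax⟩ := reindex μ (n - 1) s hscard
    exact ⟨a, x, (measure_eq_finset_sum μ s hs0).trans hax⟩
  · -- converse
    rintro ⟨a, x, hμ⟩
    set s : Finset E := Finset.image x Finset.univ with hsdef
    have hsc : s.card < n := by
      have h1 : s.card ≤ (Finset.univ : Finset (Fin (n-1))).card := Finset.card_image_le
      rw [Finset.card_univ, Fintype.card_fin] at h1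
      omega
    have hsm : MeasurableSet ((↑s : Set E)ᶜ) :=
      s.finite_toSet.isClosed.measurableSet.compl
    have hs0 : μ (↑s)ᶜ = 0 := by
      rw [hμ, Measure.coe_finset_sum, Finset.sum_apply]
      refine Finset.sum_eq_zero fun l _ => ?_
      rw [Measure.smul_apply, Measure.dirac_apply' _ hsm, smul_eq_mul]
      rw [Set.indicator_of_notMem, mul_zero]
      simp only [Set.mem_compl_iff, Finset.mem_coe, not_not, hsdef]
      exact Finset.mem_image_of_mem x (Finset.mem_univ l)
    have hN : π (⋃ i, (fun z : Fin n → E => z i) ⁻¹' ((↑s : Set E)ᶜ)) = 0 :=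
      measure_iUnion_null fun i => Measure.pi_eval_preimage_null _ hs0
    have hae2 : f =ᵐ[π] 0 := by
      have hnm : ∀ᵐ z ∂π, z ∉ ⋃ i, (fun z : Fin n → E => z i) ⁻¹' ((↑s : Set E)ᶜ) := by
        exact (measure_eq_zero_iff_ae_notMem (μ := π)).1 hN
      filter_upwards [hnm] with z hz
      have hzi : ∀ i, z i ∈ s := by
        intro i
        by_contra hc
        exact hz (Set.mem_iUnion.2 ⟨i, hc⟩)
      obtain ⟨i, -, j, -, hij, hzeq⟩ :=
        Finset.exists_ne_map_eq_of_card_lt_of_maps_to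
          (show s.card < (Finset.univ : Finset (Fin n)).card by
            rw [Finset.card_univ, Fintype.card_fin]; exact hsc)
          (fun i _ => hzi i)
      show f z = 0
      rcases lt_or_gt_of_ne hij with hlt | hlt
      · refine Finset.prod_eq_zero (i := (i, j)) ?_ ?_
        · exact Finset.mem_filter.2 ⟨Finset.mem_univ _, hlt⟩
        · simp [hzeq]
      · refine Finset.prod_eq_zero (i := (j, i)) ?_ ?_
        · exact Finset.mem_filter.2 ⟨Finset.mem_univ _, hlt⟩
        · simp [hzeq]
    exact integral_eq_zero_of_ae hae2
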